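/- Let Y = Adj(X, x_j, A_j, a_j) be a shrinking adjunction space and y₀ ∈ X. If (X, y₀) is sequentially 0-connected and (A_j, a_j) is sequentially 0-connected for every j ∈ ℕ, then (Y, y₀) is sequentially 0-connected. -/

import Mathlib

set_option linter.unusedSectionVars false

open Set Filter Topology

namespace ShrinkingAdjunction

variable (X : Type*) [TopologicalSpace X] (A : ℕ → Type*) [∀ j, TopologicalSpace (A j)]
  (x : ℕ → X) (a : ∀ j, A j)

/-- Gluing relation for the `k`-th finite adjunction space on the carrier `X ⊕ Σ j, A j`:
for `j < k` the copy of `A j` is attached to `x j` along its basepoint `a j`, and for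
`j ≥ k` the copy of `A j` is collapsed entirely to `x j`. -/
def rel (k : ℕ) : (X ⊕ Σ j : ℕ, A j) → (X ⊕ Σ j : ℕ, A j) → Prop := fun p q =>
  ∃ j b, (j < k → b = a j) ∧
    ((p = Sum.inl (x j) ∧ q = Sum.inr ⟨j, b⟩) ∨ (q = Sum.inl (x j) ∧ p = Sum.inr ⟨j, b⟩))

/-- The `k`-th finite adjunction space `Y_k`, with the quotient (weak) topology. -/
def FinAdj (k : ℕ) : Type _ := Quot (rel X A x a k)

instance (k : ℕ) : TopologicalSpace (FinAdj X A x a k) :=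
  inferInstanceAs (TopologicalSpace (Quot _))

/-- The bonding retraction `ρ_{k+1,k} : Y_{k+1} → Y_k`, collapsing `A_{k+1}` to `x_{k+1}`. -/
def bond (k : ℕ) : FinAdj X A x a (k + 1) → FinAdj X A x a k :=
  Quot.lift (Quot.mk _) fun p q h =>
    Quot.sound (by
      obtain ⟨j, b, hj, hpq⟩ := h
      exact ⟨j, b, fun h' => hj (Nat.lt_succ_of_lt h'), hpq⟩)

/-- The shrinking adjunction space `Adj(X, x_j, A_j, a_j)`: the inverse limit of the finite
adjunction spaces `Y_k`, topologized as a subspace of the product `∏ k, Y_k`. -/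
def ShrAdj : Type _ :=
  {y : ∀ k, FinAdj X A x a k // ∀ k, bond X A x a k (y (k + 1)) = y k}

instance : TopologicalSpace (ShrAdj X A x a) :=
  inferInstanceAs (TopologicalSpace
    {y : ∀ k, FinAdj X A x a k // ∀ k, bond X A x a k (y (k + 1)) = y k})

/-- Canonical inclusion of the core `X` into the shrinking adjunction space. -/
def inclX : C(X, ShrAdj X A x a) :=
  ⟨fun z => ⟨fun _ => Quot.mk _ (Sum.inl z), fun _ => rfl⟩, by
    apply Continuous.subtype_mk
    exact continuous_pi fun k => continuous_quot_mk.comp continuous_inl⟩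

/-- Canonical inclusion of the attachment space `A j`. -/
def inclA (j : ℕ) : C(A j, ShrAdj X A x a) :=
  ⟨fun b => ⟨fun _ => Quot.mk _ (Sum.inr ⟨j, b⟩), fun _ => rfl⟩, by
    apply Continuous.subtype_mk
    exact continuous_pi fun k => continuous_quot_mk.comp (continuous_inr.comp continuous_sigmaMk)⟩

/-- The map on the carrier which collapses every attachment space to its attachment point. -/
def coreMap : (X ⊕ Σ j : ℕ, A j) → X := Sum.elim id fun p => x p.1

theorem coreMap_rel (k : ℕ) :
    ∀ p q, rel X A x a k p q → coreMap X A x p = coreMap X A x q := by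
  rintro p q ⟨j, b, -, ⟨rfl, rfl⟩ | ⟨rfl, rfl⟩⟩ <;> rfl

/-- The canonical retraction `r : Y → X` collapsing every `A j` to `x j`. -/
def retrCore : C(ShrAdj X A x a, X) :=
  ⟨fun y => Quot.lift (coreMap X A x) (coreMap_rel X A x a 0) (y.1 0),
    (continuous_quot_lift _
        (continuous_id.sumElim (continuous_sigma fun i => (continuous_const : Continuous fun _ : A i => x i)))).comp
      ((continuous_apply 0).comp continuous_subtype_val)⟩

/-- The map on the carrier collapsing everything except the copy of `A j` to `a j`. -/
def projMap (j : ℕ) : (X ⊕ Σ i : ℕ, A i) → A j :=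
  Sum.elim (fun _ => a j) fun p => if h : p.1 = j then h ▸ p.2 else a j

theorem projMap_rel (j : ℕ) :
    ∀ p q, rel X A x a (j + 1) p q → projMap X A a j p = projMap X A a j q := by
  rintro p q ⟨i, b, hib, ⟨rfl, rfl⟩ | ⟨rfl, rfl⟩⟩ <;>
  · simp only [projMap, Sum.elim_inl, Sum.elim_inr]
    rcases eq_or_ne i j with rfl | h
    · rw [dif_pos rfl]
      first
      | exact (hib (Nat.lt_succ_self i))
      | exact (hib (Nat.lt_succ_self i)).symm
    · rw [dif_neg h]

theorem projMap_continuous (j : ℕ) : Continuous (projMap X A a j) := by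
  refine Continuous.sumElim continuous_const (continuous_sigma fun i => ?_)
  rcases eq_or_ne i j with rfl | h
  · simp only [dif_pos rfl]
    exact continuous_id
  · simp only [dif_neg h]
    exact continuous_const

/-- The canonical retraction `r_j : Y → A j` collapsing the rest of `Y` to `a j`. -/
def retrA (j : ℕ) : C(ShrAdj X A x a, A j) :=
  ⟨fun y => Quot.lift (projMap X A a j) (projMap_rel X A x a j) (y.1 (j + 1)),
    (continuous_quot_lift _ (projMap_continuous X A a j)).comp
      ((continuous_apply (j + 1)).comp continuous_subtype_val)⟩



/-! ### Auxiliary lemmas -/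

theorem projMap_rel' (j k : ℕ) (hjk : j < k) :
    ∀ p q, rel X A x a k p q → projMap X A a j p = projMap X A a j q := by
  rintro p q ⟨i, b, hib, ⟨rfl, rfl⟩ | ⟨rfl, rfl⟩⟩ <;>
  · simp only [projMap, Sum.elim_inl, Sum.elim_inr]
    rcases eq_or_ne i j with rfl | h
    · rw [dif_pos rfl]
      first
      | exact (hib hjk)
      | exact (hib hjk).symm
    · rw [dif_neg h]

/-- The projection to `A j`, defined on any level `k > j`. -/
def projL (j k : ℕ) (hjk : j < k) : FinAdj X A x a k → A j :=
  Quot.lift (projMap X A a j) (projMap_rel' X A x a j k hjk)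

/-- The projection to the core `X`, defined on any level. -/
def coreL (k : ℕ) : FinAdj X A x a k → X :=
  Quot.lift (coreMap X A x) (coreMap_rel X A x a k)

variable {X A x a}

theorem projL_mk {j k : ℕ} (hjk : j < k) (p : X ⊕ Σ i : ℕ, A i) :
    projL X A x a j k hjk (Quot.mk _ p) = projMap X A a j p := rfl

theorem coreL_mk (k : ℕ) (p : X ⊕ Σ i : ℕ, A i) :
    coreL X A x a k (Quot.mk _ p) = coreMap X A x p := rfl

theorem retrA_eq (j : ℕ) (y : ShrAdj X A x a) :
    retrA X A x a j y = projL X A x a j (j + 1) (Nat.lt_succ_self j) (y.1 (j + 1)) := rfl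

theorem retrCore_eq (y : ShrAdj X A x a) :
    retrCore X A x a y = coreL X A x a 0 (y.1 0) := rfl

theorem projL_bond {j k : ℕ} (hjk : j < k) (q : FinAdj X A x a (k + 1)) :
    projL X A x a j k hjk (bond X A x a k q) =
      projL X A x a j (k + 1) (Nat.lt_succ_of_lt hjk) q := by
  obtain ⟨p, rfl⟩ := Quot.exists_rep q
  rfl

theorem coreL_bond (k : ℕ) (q : FinAdj X A x a (k + 1)) :
    coreL X A x a k (bond X A x a k q) = coreL X A x a (k + 1) q := by
  obtain ⟨p, rfl⟩ := Quot.exists_rep q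
  rfl

theorem projL_thread (y : ShrAdj X A x a) (j : ℕ) :
    ∀ k (hjk : j < k), projL X A x a j k hjk (y.1 k) = retrA X A x a j y := by
  intro k
  induction k with
  | zero => omega
  | succ k ih =>
    intro hjk
    rcases Nat.lt_or_ge j k with h | h
    · rw [← ih h, ← y.2 k, projL_bond]
    · have hk : k = j := by omega
      subst hk
      rw [retrA_eq]
  
theorem coreL_thread (y : ShrAdj X A x a) :
    ∀ k, coreL X A x a k (y.1 k) = retrCore X A x a y := by
  intro k
  induction k with
  | zero => rfl
  | succ k ih => rw [← ih, ← y.2 k, coreL_bond]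

theorem thread_down (y : ShrAdj X A x a) {k m : ℕ} (h : k ≤ m) (p : X ⊕ Σ j : ℕ, A j)
    (hm : y.1 m = Quot.mk _ p) : y.1 k = Quot.mk _ p := by
  induction m with
  | zero => exact (Nat.le_zero.mp h) ▸ hm
  | succ m ih =>
    rcases Nat.eq_or_lt_of_le h with rfl | h'
    · exact hm
    · exact ih (Nat.lt_succ_iff.mp h') (by rw [← y.2 m, hm]; rfl)

theorem inclA_apply (j : ℕ) (b : A j) (k : ℕ) :
    (inclA X A x a j b).1 k = Quot.mk (rel X A x a k) (Sum.inr ⟨j, b⟩) := rfl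

theorem inclX_apply (z : X) (k : ℕ) :
    (inclX X A x a z).1 k = Quot.mk (rel X A x a k) (Sum.inl z) := rfl

theorem projMap_self (j : ℕ) (c : A j) : projMap X A a j (Sum.inr ⟨j, c⟩) = c :=
  dif_pos rfl

theorem projMap_other {i j : ℕ} (hij : i ≠ j) (c : A i) :
    projMap X A a j (Sum.inr ⟨i, c⟩) = a j :=
  dif_neg hij

/-- For `j ≥ k`, the copy of `A j` is collapsed to `x j` at level `k`. -/
theorem mk_inr_eq_mk_inl {j k : ℕ} (hjk : ¬ j < k) (b : A j) :
    Quot.mk (rel X A x a k) (Sum.inr ⟨j, b⟩) = Quot.mk (rel X A x a k) (Sum.inl (x j)) :=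
  Quot.sound ⟨j, b, fun h => absurd h hjk, Or.inr ⟨rfl, rfl⟩⟩

theorem mk_inr_base_eq {j k : ℕ} :
    Quot.mk (rel X A x a k) (Sum.inr ⟨j, a j⟩) = Quot.mk (rel X A x a k) (Sum.inl (x j)) :=
  Quot.sound ⟨j, a j, fun _ => rfl, Or.inr ⟨rfl, rfl⟩⟩

theorem inclA_basepoint (j : ℕ) : inclA X A x a j (a j) = inclX X A x a (x j) :=
  Subtype.ext (funext fun _ => mk_inr_base_eq)

theorem retrA_inclA (j : ℕ) (b : A j) : retrA X A x a j (inclA X A x a j b) = b := by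
  rw [retrA_eq, inclA_apply, projL_mk, projMap_self]

theorem retrCore_inclA (j : ℕ) (b : A j) :
    retrCore X A x a (inclA X A x a j b) = x j := rfl

theorem retrCore_inclX (z : X) : retrCore X A x a (inclX X A x a z) = z := rfl

theorem retrA_inclX (j : ℕ) (z : X) : retrA X A x a j (inclX X A x a z) = a j := rfl

/-- Structure lemma: a point with a nontrivial `A j`-projection lies in the copy of `A j`. -/
theorem eq_inclA (y : ShrAdj X A x a) (j : ℕ) (hj : retrA X A x a j y ≠ a j) :
    y = inclA X A x a j (retrA X A x a j y) := by
  have key : ∀ k (hk : j < k), y.1 k = Quot.mk _ (Sum.inr ⟨j, retrA X A x a j y⟩) := by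
    intro k hk
    obtain ⟨p, hp⟩ := Quot.exists_rep (y.1 k)
    have hproj : projMap X A a j p = retrA X A x a j y := by
      have h1 := projL_thread y j k hk
      rw [← hp, projL_mk] at h1
      exact h1
    match p, hp, hproj with
    | Sum.inl z, hp, hproj => exact absurd hproj.symm hj
    | Sum.inr ⟨i, c⟩, hp, hproj =>
      rcases eq_or_ne i j with rfl | hij
      · rw [projMap_self] at hproj
        rw [← hp, hproj]
      · rw [projMap_other hij] at hproj
        exact absurd hproj.symm hj
  refine Subtype.ext (funext fun k => ?_)
  rcases Nat.lt_or_ge j k with h | h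
  · exact key k h
  · exact thread_down y (Nat.le_succ_of_le h) _ (key (j + 1) (Nat.lt_succ_self j))

/-- Structure lemma: a point with trivial `A j`-projections lies in the core. -/
theorem eq_inclX (y : ShrAdj X A x a) (h : ∀ j, retrA X A x a j y = a j) :
    y = inclX X A x a (retrCore X A x a y) := by
  refine Subtype.ext (funext fun k => ?_)
  show y.1 k = Quot.mk _ (Sum.inl (retrCore X A x a y))
  obtain ⟨p, hp⟩ := Quot.exists_rep (y.1 k)
  have hcore := coreL_thread y k
  rw [← hp, coreL_mk] at hcore
  match p, hp, hcore with
  | Sum.inl z, hp, hcore =>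
    rw [← hp, show z = retrCore X A x a y from hcore]
  | Sum.inr ⟨i, c⟩, hp, hcore =>
    have hxi : x i = retrCore X A x a y := hcore
    rcases Nat.lt_or_ge i k with hik | hik
    · have hc : c = a i := by
        have h1 := projL_thread y i k hik
        rw [← hp, projL_mk, projMap_self] at h1
        rw [h1, h i]
      rw [← hp, hc, mk_inr_base_eq, hxi]
    · rw [← hp, mk_inr_eq_mk_inl (by omega) c, hxi]

end ShrinkingAdjunction

open ShrinkingAdjunction

/-- A countable family of maps clusters at (converges toward) a point. -/
def ClustersAt {K Z W : Type*} [TopologicalSpace Z] [TopologicalSpace W]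
    (f : K → C(Z, W)) (w : W) : Prop :=
  ∀ U ∈ nhds w, {k : K | ¬ Set.range (f k) ⊆ U}.Finite

/-- `(Z, z)` is sequentially 0-connected: every sequence `z_k → z` admits a sequence of
paths from `z` to `z_k` converging to `z`. -/
def SeqZeroConnectedAt (Z : Type*) [TopologicalSpace Z] (z : Z) : Prop :=
  ∀ u : ℕ → Z, Filter.Tendsto u Filter.atTop (nhds z) →
    ∃ α : ℕ → C(unitInterval, Z), (∀ k, α k 0 = z ∧ α k 1 = u k) ∧ ClustersAt α z


/-- Pushing a clustering family of maps forward along a continuous map. -/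
theorem ClustersAt.comp_left {Z W : Type*} [TopologicalSpace Z] [TopologicalSpace W]
    {K : Type*} {f : K → C(unitInterval, Z)} {z : Z} (hf : ClustersAt f z) (g : C(Z, W)) :
    ClustersAt (fun k => g.comp (f k)) (g z) := by
  intro U hU
  refine (hf (g ⁻¹' U) (g.continuous.continuousAt hU)).subset fun k hk hsub => hk ?_
  rintro _ ⟨t, rfl⟩
  exact hsub ⟨t, rfl⟩

theorem finite_of_eventually {P : ℕ → Prop} (h : ∀ᶠ k in Filter.atTop, P k) :
    {k : ℕ | ¬ P k}.Finite := by
  obtain ⟨K, hK⟩ := Filter.eventually_atTop.mp h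
  refine (Set.finite_Iio K).subset fun k hk => ?_
  by_contra h'
  exact hk (hK k (not_lt.mp h'))

theorem seqZeroConnectedAt_shrAdj' (X : Type*) [TopologicalSpace X]
    (A : ℕ → Type*) [∀ j, TopologicalSpace (A j)] (x : ℕ → X) (a : ∀ j, A j)
    (y₀ : X) (hX : SeqZeroConnectedAt X y₀) (hA : ∀ j, SeqZeroConnectedAt (A j) (a j)) :
    SeqZeroConnectedAt (ShrAdj X A x a) (inclX X A x a y₀) := by
  classical
  intro u hu
  -- the core shadows of the sequence
  have hv : Filter.Tendsto (fun k => retrCore X A x a (u k)) Filter.atTop (nhds y₀) :=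
    ((retrCore X A x a).continuous.tendsto _).comp hu
  obtain ⟨β, hβ, hβc⟩ := hX _ hv
  -- the `A j`-shadows of the sequence
  have hw : ∀ j, Filter.Tendsto (fun k => retrA X A x a j (u k)) Filter.atTop (nhds (a j)) :=
    fun j => ((retrA X A x a j).continuous.tendsto _).comp hu
  choose γ hγ hγc using fun j => hA j _ (hw j)
  -- construction of the paths
  have main : ∀ k, ∃ α : C(unitInterval, ShrAdj X A x a),
      (α 0 = inclX X A x a y₀ ∧ α 1 = u k) ∧
      (Set.range α ⊆ Set.range (fun t => inclX X A x a (β k t)) ∨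
        ∃ j, retrA X A x a j (u k) ≠ a j ∧ retrCore X A x a (u k) = x j ∧
          Set.range α ⊆ Set.range (fun t => inclX X A x a (β k t)) ∪
            Set.range (fun t => inclA X A x a j (γ j k t))) := by
    intro k
    by_cases hcase : ∀ j, retrA X A x a j (u k) = a j
    · have huk : u k = inclX X A x a (retrCore X A x a (u k)) := eq_inclX (u k) hcase
      refine ⟨(((⟨β k, (hβ k).1, (hβ k).2⟩ : Path y₀ (retrCore X A x a (u k))).map
          (inclX X A x a).continuous).cast rfl huk).toContinuousMap,
        ⟨Path.source _, Path.target _⟩, Or.inl fun yy hyy => hyy⟩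
    · push_neg at hcase
      obtain ⟨j, hj⟩ := hcase
      have huk : u k = inclA X A x a j (retrA X A x a j (u k)) := eq_inclA (u k) j hj
      have hvx : retrCore X A x a (u k) = x j := by rw [huk, retrCore_inclA]
      refine ⟨(Path.trans
          ((⟨β k, (hβ k).1, (hβ k).2⟩ : Path y₀ (retrCore X A x a (u k))).map
            (inclX X A x a).continuous)
          (((⟨γ j k, (hγ j k).1, (hγ j k).2⟩ :
              Path (a j) (retrA X A x a j (u k))).map
            (inclA X A x a j).continuous).cast
            (by rw [hvx, inclA_basepoint]) huk)).toContinuousMap,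
        ⟨Path.source _, Path.target _⟩, Or.inr ⟨j, hj, hvx, ?_⟩⟩
      have hr := Path.trans_range
        ((⟨β k, (hβ k).1, (hβ k).2⟩ : Path y₀ (retrCore X A x a (u k))).map
            (inclX X A x a).continuous)
        (((⟨γ j k, (hγ j k).1, (hγ j k).2⟩ :
              Path (a j) (retrA X A x a j (u k))).map
            (inclA X A x a j).continuous).cast
            (by rw [hvx, inclA_basepoint]) huk)
      refine subset_trans (Set.Subset.trans (by exact fun yy hyy => hyy) hr.subset) ?_
      exact Set.union_subset_union (fun yy hyy => hyy) (fun yy hyy => hyy)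
  choose α hend hcases using main
  refine ⟨α, hend, ?_⟩
  -- clustering
  intro U hU
  -- find a basic cylinder neighborhood inside U
  have hind := (Topology.IsInducing.subtypeVal
      (t := {y : ∀ k, FinAdj X A x a k | ∀ k, bond X A x a k (y (k + 1)) = y k}))
  have hU' := Filter.mem_comap.mp ((hind.nhds_eq_comap (inclX X A x a y₀)).ge hU)
  obtain ⟨W, hW, hWU⟩ := hU'
  rw [nhds_pi, Filter.mem_pi] at hW
  obtain ⟨I, hIfin, t, ht, htW⟩ := hW
  obtain ⟨N₀, hN₀⟩ := hIfin.bddAbove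
  set C : Set (ShrAdj X A x a) := {y | ∀ m ∈ I, y.1 m ∈ t m} with hC_def
  have hCU : C ⊆ U := fun y hy => hWU (htW fun m hm => hy m hm)
  have hC : C ∈ nhds (inclX X A x a y₀) := by
    have hpi : I.pi t ∈ nhds (inclX X A x a y₀).1 :=
      set_pi_mem_nhds hIfin fun m _ => ht m
    have := (continuous_subtype_val.continuousAt (x := inclX X A x a y₀)).preimage_mem_nhds hpi
    refine Filter.mem_of_superset this fun y hy m hm => hy m hm
  -- the core shadows in `Y`
  have hXv : Filter.Tendsto (fun k => inclX X A x a (retrCore X A x a (u k)))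
      Filter.atTop (nhds (inclX X A x a y₀)) :=
    ((inclX X A x a).continuous.tendsto _).comp hv
  -- the three families of exceptional sets
  have hE1 : {k : ℕ | ¬ Set.range (fun t => inclX X A x a (β k t)) ⊆ U}.Finite :=
    hβc.comp_left (inclX X A x a) U hU
  have hE3 : {k : ℕ | ¬ inclX X A x a (retrCore X A x a (u k)) ∈ C}.Finite := by
    refine finite_of_eventually ?_
    have := hXv hC
    rw [Filter.mem_map] at this
    exact this
  have hE4 : ∀ j, {k : ℕ | retrA X A x a j (u k) ≠ a j ∧ retrCore X A x a (u k) = x j ∧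
      ¬ Set.range (fun s => inclA X A x a j (γ j k s)) ⊆ U}.Finite := by
    intro j
    by_contra hfin
    have hint : interior U ∈ nhds (inclX X A x a y₀) := interior_mem_nhds.mpr hU
    have hev := hXv hint
    rw [Filter.mem_map] at hev
    obtain ⟨K, hK⟩ := Filter.mem_atTop_sets.mp hev
    obtain ⟨k, hkE, hkK⟩ : ∃ k, (retrA X A x a j (u k) ≠ a j ∧ retrCore X A x a (u k) = x j ∧
        ¬ Set.range (fun s => inclA X A x a j (γ j k s)) ⊆ U) ∧ K ≤ k := by
      by_contra h'
      push_neg at h'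
      exact hfin ((Set.finite_Iio K).subset fun k hk => h' k hk)
    have hxj : inclX X A x a (x j) ∈ interior U := hkE.2.1 ▸ hK k hkK
    have haj : inclA X A x a j (a j) ∈ interior U := by rw [inclA_basepoint]; exact hxj
    have hV : (fun b => inclA X A x a j b) ⁻¹' interior U ∈ nhds (a j) :=
      ((inclA X A x a j).continuous.continuousAt).preimage_mem_nhds
        (isOpen_interior.mem_nhds haj)
    refine hfin (((hγc j) _ hV).subset fun k hk hrange => hk.2.2 ?_)
    rintro _ ⟨s, rfl⟩
    exact interior_subset (hrange ⟨s, rfl⟩)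
  -- assembling
  have hEsub : {k : ℕ | ¬ Set.range (α k) ⊆ U} ⊆
      ({k : ℕ | ¬ Set.range (fun t => inclX X A x a (β k t)) ⊆ U} ∪
        {k : ℕ | ¬ inclX X A x a (retrCore X A x a (u k)) ∈ C}) ∪
      ⋃ j ∈ Set.Iio (N₀ + 1), {k : ℕ | retrA X A x a j (u k) ≠ a j ∧
        retrCore X A x a (u k) = x j ∧
        ¬ Set.range (fun s => inclA X A x a j (γ j k s)) ⊆ U} := by
    intro k hk
    rcases hcases k with hr | ⟨j, hj, hvx, hr⟩
    · exact Or.inl (Or.inl fun h1 => hk (hr.trans h1))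
    · by_cases h1 : Set.range (fun t => inclX X A x a (β k t)) ⊆ U
      · have h2 : ¬ Set.range (fun s => inclA X A x a j (γ j k s)) ⊆ U :=
          fun h2 => hk (hr.trans (Set.union_subset h1 h2))
        by_cases hjN : j < N₀ + 1
        · exact Or.inr (Set.mem_biUnion hjN ⟨hj, hvx, h2⟩)
        · refine Or.inl (Or.inr fun hkC => h2 ?_)
          rintro _ ⟨s, rfl⟩
          refine hCU fun m hm => ?_
          have hmj : ¬ j < m := fun h => hjN (by have := hN₀ hm; omega)
          show (inclA X A x a j (γ j k s)).1 m ∈ t m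
          rw [inclA_apply, mk_inr_eq_mk_inl hmj, ← hvx]
          exact hkC m hm
      · exact Or.inl (Or.inl h1)
  exact (((hE1.union hE3).union
    ((Set.finite_Iio (N₀ + 1)).biUnion fun j _ => hE4 j)).subset hEsub)
/-- If `(X, y₀)` and every `(A j, a j)` are sequentially 0-connected, then the shrinking
adjunction space `Y = Adj(X, x_j, A_j, a_j)` is sequentially 0-connected at `y₀`. -/
theorem seqZeroConnectedAt_shrAdj (X : Type*) [TopologicalSpace X]
    (A : ℕ → Type*) [∀ j, TopologicalSpace (A j)] (x : ℕ → X) (a : ∀ j, A j)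
    (y₀ : X) (hX : SeqZeroConnectedAt X y₀) (hA : ∀ j, SeqZeroConnectedAt (A j) (a j)) :
    SeqZeroConnectedAt (ShrAdj X A x a) (inclX X A x a y₀) := by
  exact seqZeroConnectedAt_shrAdj' X A x a y₀ hX hA
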